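/- The double kite graph DK(⌊n/3⌋, n − 2⌊n/3⌋ − 2) on n vertices has normalized Laplacian spectral gap λ₁ ≤ (1+o(1))·54/n³ as n → ∞. -/

import Mathlib

open Finset
open scoped Classical

noncomputable section

variable {V : Type*}

/-- Dirichlet energy `∑_{u~v} (f u - f v)^2` (each edge counted once). -/
def SimpleGraph.energyForm [Fintype V] (G : SimpleGraph V) (f : V → ℝ) : ℝ :=
  (1/2) * ∑ x : V, ∑ y : V, if G.Adj x y then (f x - f y)^2 else 0

/-- The weighted norm `∑_x f(x)^2 d(x)`. -/
def SimpleGraph.qForm [Fintype V] (G : SimpleGraph V) (f : V → ℝ) : ℝ :=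
  ∑ x : V, (f x)^2 * (G.degree x : ℝ)

/-- The spectral gap of the normalized Laplacian, via the variational characterization
`λ₁ = inf { R(f) : ∑ f(u) d(u) = 0, f ≢ 0 }`. -/
def SimpleGraph.lambda1 [Fintype V] (G : SimpleGraph V) : ℝ :=
  sInf { r | ∃ f : V → ℝ, (∑ x : V, f x * (G.degree x : ℝ)) = 0 ∧ G.qForm f ≠ 0 ∧
    r = G.energyForm f / G.qForm f }

/-- One-directional edge relation of the double kite graph `DK(r,s)`:
two copies of `K_r` joined by a path with `s` internal vertices. -/
def DKrel (r s : ℕ) : (Fin r ⊕ (Fin s ⊕ Fin r)) → (Fin r ⊕ (Fin s ⊕ Fin r)) → Prop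
  | Sum.inl a, Sum.inl b => a < b
  | Sum.inr (Sum.inr a), Sum.inr (Sum.inr b) => a < b
  | Sum.inl a, Sum.inr (Sum.inl j) => a.val = 0 ∧ j.val = 0
  | Sum.inr (Sum.inl i), Sum.inr (Sum.inl j) => (j : ℕ) = (i : ℕ) + 1
  | Sum.inr (Sum.inl i), Sum.inr (Sum.inr b) => (i : ℕ) + 1 = s ∧ b.val = 0
  | Sum.inl a, Sum.inr (Sum.inr b) => s = 0 ∧ a.val = 0 ∧ b.val = 0
  | _, _ => False

/-- The double kite graph `DK(r,s)`: two copies of `K_r` joined by a path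
`p₀, p₁, …, p_s, p_{s+1}` whose endpoints lie in the two cliques. -/
def doubleKite (r s : ℕ) : SimpleGraph (Fin r ⊕ (Fin s ⊕ Fin r)) where
  Adj x y := DKrel r s x y ∨ DKrel r s y x
  symm := ⟨fun _ _ (h : _ ∨ _) => h.symm⟩
  loopless := ⟨by
    rintro (a | j | b) h <;>
      simp only [DKrel, lt_self_iff_false, or_self] at h <;> omega⟩

/-! ### Generic helper lemmas -/

lemma deg_eq [Fintype V] (G : SimpleGraph V) (x : V) :
    (G.degree x : ℝ) = ∑ y : V, if G.Adj x y then (1:ℝ) else 0 := by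
  classical
  rw [SimpleGraph.degree, SimpleGraph.neighborFinset_eq_filter, Finset.card_filter]
  push_cast
  simp

lemma qform_eq [Fintype V] (G : SimpleGraph V) (f : V → ℝ) :
    G.qForm f = ∑ x : V, ∑ y : V, if G.Adj x y then f x ^ 2 else 0 := by
  unfold SimpleGraph.qForm
  refine Finset.sum_congr rfl fun x _ => ?_
  rw [deg_eq, Finset.mul_sum]
  exact Finset.sum_congr rfl fun y _ => by rw [mul_ite, mul_one, mul_zero]

lemma constraint_eq [Fintype V] (G : SimpleGraph V) (f : V → ℝ) :
    (∑ x : V, f x * (G.degree x : ℝ)) = ∑ x : V, ∑ y : V, if G.Adj x y then f x else 0 := by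
  refine Finset.sum_congr rfl fun x _ => ?_
  rw [deg_eq, Finset.mul_sum]
  exact Finset.sum_congr rfl fun y _ => by rw [mul_ite, mul_one, mul_zero]

lemma energy_nonneg [Fintype V] (G : SimpleGraph V) (f : V → ℝ) :
    0 ≤ G.energyForm f := by
  unfold SimpleGraph.energyForm
  apply mul_nonneg (by norm_num)
  refine Finset.sum_nonneg fun x _ => Finset.sum_nonneg fun y _ => ?_
  split_ifs
  · positivity
  · exact le_refl 0

lemma qform_nonneg [Fintype V] (G : SimpleGraph V) (f : V → ℝ) :
    0 ≤ G.qForm f := by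
  unfold SimpleGraph.qForm
  exact Finset.sum_nonneg fun x _ => by positivity

lemma lambda1_le_ratio [Fintype V] (G : SimpleGraph V) (f : V → ℝ)
    (hc : (∑ x : V, f x * (G.degree x : ℝ)) = 0) (hq : G.qForm f ≠ 0) :
    G.lambda1 ≤ G.energyForm f / G.qForm f := by
  apply csInf_le
  · refine ⟨0, fun z hz => ?_⟩
    obtain ⟨g, -, -, rfl⟩ := hz
    exact div_nonneg (energy_nonneg G g) (qform_nonneg G g)
  · exact ⟨f, hc, hq, rfl⟩

lemma sum_succ_eq {s : ℕ} (c : ℝ) (i : Fin s) :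
    (∑ j : Fin s, if (j:ℕ) = (i:ℕ)+1 then c else 0) = if (i:ℕ)+1 < s then c else 0 := by
  by_cases h : (i:ℕ)+1 < s
  · rw [if_pos h, Finset.sum_eq_single (⟨(i:ℕ)+1, h⟩ : Fin s)]
    · simp
    · intro j _ hj
      rw [if_neg]
      intro hc; exact hj (Fin.ext hc)
    · simp
  · rw [if_neg h]
    apply Finset.sum_eq_zero
    intro j _
    rw [if_neg]
    intro hc; exact h (hc ▸ j.isLt)

lemma sum_fin_lt (s : ℕ) (c : ℕ → ℝ) :
    (∑ i : Fin s, if (i:ℕ)+1 < s then c (i:ℕ) else 0) = ∑ k ∈ Finset.range (s-1), c k := by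
  rw [Fin.sum_univ_eq_sum_range (fun k => if k+1 < s then c k else 0)]
  rw [show Finset.range (s-1) = (Finset.range s).filter (fun k => k+1 < s) by
    ext k; simp [Finset.mem_range]; omega]
  rw [Finset.sum_filter]

lemma gauss_real (m : ℕ) : (∑ k ∈ Finset.range m, (k:ℝ)) = m*(m-1)/2 := by
  have h2 : ((∑ i ∈ Finset.range m, i : ℕ) : ℝ) * 2 = (m:ℝ) * ((m:ℝ) - 1) := by
    by_cases hm : m = 0
    · subst hm; simp
    · have h1 : (1:ℕ) ≤ m := Nat.one_le_iff_ne_zero.2 hm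
      have h := congrArg (Nat.cast : ℕ → ℝ) (Finset.sum_range_id_mul_two m)
      push_cast [Nat.cast_sub h1] at h ⊢
      linarith
  push_cast at h2 ⊢
  linarith

lemma affine_sum (m : ℕ) (A B : ℝ) :
    (∑ k ∈ Finset.range m, (A + B*(k:ℝ))) = m*A + B*((m:ℝ)*((m:ℝ)-1)/2) := by
  rw [Finset.sum_add_distrib, Finset.sum_const, ← Finset.mul_sum, gauss_real]
  simp [nsmul_eq_mul]

lemma pair_count (r : ℕ) :
    2 * (∑ a : Fin r, ∑ b : Fin r, if a < b then (1:ℝ) else 0) = r * (r-1) := by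
  have hswap : (∑ a : Fin r, ∑ b : Fin r, if a < b then (1:ℝ) else 0)
      = ∑ a : Fin r, ∑ b : Fin r, if b < a then (1:ℝ) else 0 := Finset.sum_comm
  rw [two_mul]
  nth_rewrite 2 [hswap]
  rw [← Finset.sum_add_distrib]
  have key : ∀ a : Fin r,
      ((∑ b : Fin r, if a < b then (1:ℝ) else 0) + ∑ b : Fin r, if b < a then (1:ℝ) else 0)
        = (r:ℝ) - 1 := by
    intro a
    rw [← Finset.sum_add_distrib]
    have h1 : ∀ b : Fin r, ((if a < b then (1:ℝ) else 0) + (if b < a then 1 else 0))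
        = 1 - (if a = b then 1 else 0) := by
      intro b
      rcases lt_trichotomy a b with h | h | h
      · rw [if_pos h, if_neg (asymm h), if_neg h.ne]; ring
      · subst h; rw [if_neg (lt_irrefl a), if_pos rfl]; ring
      · rw [if_neg (asymm h), if_pos h, if_neg (ne_of_gt h)]; ring
    rw [Finset.sum_congr rfl fun b _ => h1 b, Finset.sum_sub_distrib, Finset.sum_const,
      Finset.sum_ite_eq _ a (fun _ => (1:ℝ)), if_pos (Finset.mem_univ a)]
    simp only [Finset.card_univ, Fintype.card_fin, nsmul_eq_mul, mul_one]
  rw [Finset.sum_congr rfl fun a _ => key a, Finset.sum_const]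
  simp [nsmul_eq_mul]

/-! ### Structure of the double kite edge relation -/

lemma DKrel_asymm (r s : ℕ) : ∀ x y, DKrel r s x y → ¬ DKrel r s y x := by
  rintro (a|i|b) (a'|i'|b') h h' <;>
    simp only [DKrel, Fin.lt_def] at h h' <;> omega

lemma adj_split (r s : ℕ) (g : Fin r ⊕ (Fin s ⊕ Fin r) → Fin r ⊕ (Fin s ⊕ Fin r) → ℝ) :
    (∑ x, ∑ y, if (doubleKite r s).Adj x y then g x y else 0)
    = (∑ x, ∑ y, if DKrel r s x y then g x y else 0)
    + (∑ x, ∑ y, if DKrel r s x y then g y x else 0) := by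
  rw [show (∑ x, ∑ y, if DKrel r s x y then g y x else 0)
      = ∑ x, ∑ y, if DKrel r s y x then g x y else 0 from Finset.sum_comm]
  rw [← Finset.sum_add_distrib]
  apply Finset.sum_congr rfl; intro x _
  rw [← Finset.sum_add_distrib]
  apply Finset.sum_congr rfl; intro y _
  by_cases h1 : DKrel r s x y
  · have hA : (doubleKite r s).Adj x y := Or.inl h1
    rw [if_pos hA, if_pos h1, if_neg (DKrel_asymm r s x y h1), add_zero]
  · by_cases h2 : DKrel r s y x
    · have hA : (doubleKite r s).Adj x y := Or.inr h2
      rw [if_pos hA, if_neg h1, if_pos h2, zero_add]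
    · have hA : ¬ (doubleKite r s).Adj x y := by rintro (h | h); exacts [h1 h, h2 h]
      rw [if_neg hA, if_neg h1, if_neg h2, add_zero]

section blocks
variable {r s : ℕ}

lemma blk_false1 (c : Fin s → Fin r → ℝ) :
    (∑ i : Fin s, ∑ a : Fin r, if DKrel r s (.inr (.inl i)) (.inl a) then c i a else 0) = 0 :=
  Finset.sum_eq_zero fun _ _ => Finset.sum_eq_zero fun _ _ => if_neg (fun hf => (hf : False))

lemma blk_false2 (c : Fin r → Fin r → ℝ) :
    (∑ b : Fin r, ∑ a : Fin r, if DKrel r s (.inr (.inr b)) (.inl a) then c b a else 0) = 0 :=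
  Finset.sum_eq_zero fun _ _ => Finset.sum_eq_zero fun _ _ => if_neg (fun hf => (hf : False))

lemma blk_false3 (c : Fin r → Fin s → ℝ) :
    (∑ b : Fin r, ∑ i : Fin s, if DKrel r s (.inr (.inr b)) (.inr (.inl i)) then c b i else 0) = 0 :=
  Finset.sum_eq_zero fun _ _ => Finset.sum_eq_zero fun _ _ => if_neg (fun hf => (hf : False))

lemma blk_s0 (hs : 0 < s) (c : Fin r → Fin r → ℝ) :
    (∑ a : Fin r, ∑ b : Fin r, if DKrel r s (.inl a) (.inr (.inr b)) then c a b else 0) = 0 := by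
  refine Finset.sum_eq_zero fun a _ => Finset.sum_eq_zero fun b _ => if_neg ?_
  intro hf
  have : s = 0 ∧ a.val = 0 ∧ b.val = 0 := hf
  omega

lemma blk_clique1 (c : Fin r → Fin r → ℝ) :
    (∑ a : Fin r, ∑ b : Fin r, if DKrel r s (.inl a) (.inl b) then c a b else 0)
    = ∑ a : Fin r, ∑ b : Fin r, if a < b then c a b else 0 :=
  Finset.sum_congr rfl fun a _ => Finset.sum_congr rfl fun b _ => if_congr Iff.rfl rfl rfl

lemma blk_clique2 (c : Fin r → Fin r → ℝ) :
    (∑ a : Fin r, ∑ b : Fin r, if DKrel r s (.inr (.inr a)) (.inr (.inr b)) then c a b else 0)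
    = ∑ a : Fin r, ∑ b : Fin r, if a < b then c a b else 0 :=
  Finset.sum_congr rfl fun a _ => Finset.sum_congr rfl fun b _ => if_congr Iff.rfl rfl rfl

lemma blk_path (c : Fin s → Fin s → ℝ) :
    (∑ i : Fin s, ∑ j : Fin s, if DKrel r s (.inr (.inl i)) (.inr (.inl j)) then c i j else 0)
    = ∑ i : Fin s, ∑ j : Fin s, if (j:ℕ) = (i:ℕ)+1 then c i j else 0 :=
  Finset.sum_congr rfl fun a _ => Finset.sum_congr rfl fun b _ => if_congr Iff.rfl rfl rfl

lemma blk_single0 (hr : 0 < r) (hs : 0 < s) (c : Fin r → Fin s → ℝ) :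
    (∑ a : Fin r, ∑ j : Fin s, if DKrel r s (.inl a) (.inr (.inl j)) then c a j else 0)
      = c ⟨0,hr⟩ ⟨0,hs⟩ := by
  rw [Finset.sum_eq_single (⟨0,hr⟩ : Fin r)]
  · rw [Finset.sum_eq_single (⟨0,hs⟩ : Fin s)]
    · exact if_pos ⟨rfl, rfl⟩
    · intro j _ hj; refine if_neg fun hd => ?_
      have : (⟨0,hr⟩ : Fin r).val = 0 ∧ j.val = 0 := hd
      exact hj (Fin.ext this.2)
    · simp
  · intro a _ ha; refine Finset.sum_eq_zero fun j _ => if_neg fun hd => ?_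
    have : a.val = 0 ∧ j.val = 0 := hd
    exact ha (Fin.ext this.1)
  · simp

lemma blk_single_last (hr : 0 < r) (hs : 0 < s) (c : Fin s → Fin r → ℝ) :
    (∑ i : Fin s, ∑ b : Fin r, if DKrel r s (.inr (.inl i)) (.inr (.inr b)) then c i b else 0)
      = c ⟨s-1, by omega⟩ ⟨0,hr⟩ := by
  rw [Finset.sum_eq_single (⟨s-1, by omega⟩ : Fin s)]
  · rw [Finset.sum_eq_single (⟨0,hr⟩ : Fin r)]
    · exact if_pos ⟨by simp; omega, rfl⟩
    · intro b _ hb; refine if_neg fun hd => ?_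
      have : ((⟨s-1, by omega⟩ : Fin s) : ℕ) + 1 = s ∧ b.val = 0 := hd
      exact hb (Fin.ext this.2)
    · simp
  · intro i _ hi; refine Finset.sum_eq_zero fun b _ => if_neg fun hd => ?_
    have h0 : (i:ℕ) + 1 = s ∧ b.val = 0 := hd
    refine hi (Fin.ext ?_)
    show (i:ℕ) = s - 1
    omega
  · simp

end blocks

lemma E_blocks (r s : ℕ) (hr : 0 < r) (hs : 0 < s)
    (h : Fin r ⊕ (Fin s ⊕ Fin r) → Fin r ⊕ (Fin s ⊕ Fin r) → ℝ) :
    (∑ x, ∑ y, if DKrel r s x y then h x y else 0)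
    = (∑ a : Fin r, ∑ b : Fin r, if a < b then h (.inl a) (.inl b) else 0)
    + (∑ a : Fin r, ∑ b : Fin r, if a < b then h (.inr (.inr a)) (.inr (.inr b)) else 0)
    + h (.inl ⟨0,hr⟩) (.inr (.inl ⟨0,hs⟩))
    + (∑ i : Fin s, ∑ j : Fin s, if (j:ℕ) = (i:ℕ)+1 then h (.inr (.inl i)) (.inr (.inl j)) else 0)
    + h (.inr (.inl ⟨s-1, by omega⟩)) (.inr (.inr ⟨0,hr⟩)) := by
  simp only [Fintype.sum_sum_type, Finset.sum_add_distrib]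
  rw [blk_false1, blk_false2, blk_false3, blk_s0 hs, blk_clique1, blk_clique2, blk_path,
    blk_single0 hr hs, blk_single_last hr hs]
  ring

/-! ### The test function -/

def tf (r s : ℕ) : Fin r ⊕ (Fin s ⊕ Fin r) → ℝ
  | Sum.inl _ => 1
  | Sum.inr (Sum.inl i) => 1 - 2 * ((i:ℝ)+1)/((s:ℝ)+1)
  | Sum.inr (Sum.inr _) => -1

lemma energy_tf (r s : ℕ) (hr : 0 < r) (hs : 0 < s) :
    (doubleKite r s).energyForm (tf r s) = 4 / ((s:ℝ)+1) := by
  have hσ : ((s:ℝ)+1) ≠ 0 := by positivity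
  have hs1 : ((s-1:ℕ):ℝ) = (s:ℝ) - 1 := by
    rw [Nat.cast_sub hs, Nat.cast_one]
  unfold SimpleGraph.energyForm
  rw [adj_split r s (fun x y => (tf r s x - tf r s y)^2)]
  rw [show (∑ x, ∑ y, if DKrel r s x y then (tf r s y - tf r s x)^2 else 0)
      = ∑ x, ∑ y, if DKrel r s x y then (tf r s x - tf r s y)^2 else 0 from
    Finset.sum_congr rfl fun x _ => Finset.sum_congr rfl fun y _ => if_congr Iff.rfl (by ring) rfl]
  rw [E_blocks r s hr hs]
  have z1 : (∑ a : Fin r, ∑ b : Fin r,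
      if a < b then (tf r s (Sum.inl a) - tf r s (Sum.inl b))^2 else 0) = 0 :=
    Finset.sum_eq_zero fun a _ => Finset.sum_eq_zero fun b _ => by simp [tf]
  have z2 : (∑ a : Fin r, ∑ b : Fin r,
      if a < b then (tf r s (Sum.inr (Sum.inr a)) - tf r s (Sum.inr (Sum.inr b)))^2 else 0) = 0 :=
    Finset.sum_eq_zero fun a _ => Finset.sum_eq_zero fun b _ => by simp [tf]
  have z4 : (∑ i : Fin s, ∑ j : Fin s, if (j:ℕ) = (i:ℕ)+1
        then (tf r s (Sum.inr (Sum.inl i)) - tf r s (Sum.inr (Sum.inl j)))^2 else 0)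
      = ((s:ℝ)-1) * (2/((s:ℝ)+1))^2 := by
    have hcong : ∀ i : Fin s, (∑ j : Fin s, if (j:ℕ) = (i:ℕ)+1
        then (tf r s (Sum.inr (Sum.inl i)) - tf r s (Sum.inr (Sum.inl j)))^2 else 0)
        = ∑ j : Fin s, if (j:ℕ) = (i:ℕ)+1 then (2/((s:ℝ)+1))^2 else 0 := by
      intro i
      refine Finset.sum_congr rfl fun j _ => ?_
      by_cases h : (j:ℕ) = (i:ℕ)+1
      · rw [if_pos h, if_pos h]
        have hj : ((j:ℕ):ℝ) = ((i:ℕ):ℝ)+1 := by exact_mod_cast h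
        simp only [tf]
        rw [hj]
        field_simp
        ring
      · rw [if_neg h, if_neg h]
    rw [Finset.sum_congr rfl fun i _ => hcong i]
    rw [Finset.sum_congr rfl fun i _ => sum_succ_eq ((2/((s:ℝ)+1))^2) i]
    rw [sum_fin_lt s (fun _ => (2/((s:ℝ)+1))^2), Finset.sum_const]
    simp only [Finset.card_range, nsmul_eq_mul]
    rw [hs1]
  rw [z1, z2, z4]
  simp only [tf, Fin.val_mk]
  rw [hs1]
  push_cast
  field_simp
  ring
lemma constraint_tf (r s : ℕ) (hr : 0 < r) (hs : 0 < s) :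
    (∑ x, tf r s x * (((doubleKite r s)).degree x : ℝ)) = 0 := by
  have hσ : ((s:ℝ)+1) ≠ 0 := by positivity
  have hs1 : ((s-1:ℕ):ℝ) = (s:ℝ) - 1 := by rw [Nat.cast_sub hs, Nat.cast_one]
  rw [constraint_eq, adj_split r s (fun x y => tf r s x)]
  rw [E_blocks r s hr hs (fun x y => tf r s x), E_blocks r s hr hs (fun x y => tf r s y)]
  have zc1 : (∑ a : Fin r, ∑ b : Fin r, if a < b then tf r s (Sum.inl a) else 0)
      = ∑ a : Fin r, ∑ b : Fin r, if a < b then (1:ℝ) else 0 :=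
    Finset.sum_congr rfl fun a _ => Finset.sum_congr rfl fun b _ =>
      if_congr Iff.rfl rfl rfl
  have zc1' : (∑ a : Fin r, ∑ b : Fin r, if a < b then tf r s (Sum.inl b) else 0)
      = ∑ a : Fin r, ∑ b : Fin r, if a < b then (1:ℝ) else 0 :=
    Finset.sum_congr rfl fun a _ => Finset.sum_congr rfl fun b _ =>
      if_congr Iff.rfl rfl rfl
  have zc2 : (∑ a : Fin r, ∑ b : Fin r, if a < b then tf r s (Sum.inr (Sum.inr a)) else 0)
      = -(∑ a : Fin r, ∑ b : Fin r, if a < b then (1:ℝ) else 0) := by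
    rw [← Finset.sum_neg_distrib]
    refine Finset.sum_congr rfl fun a _ => ?_
    rw [← Finset.sum_neg_distrib]
    refine Finset.sum_congr rfl fun b _ => ?_
    by_cases h : a < b
    · rw [if_pos h, if_pos h]; rfl
    · rw [if_neg h, if_neg h]; ring
  have zc2' : (∑ a : Fin r, ∑ b : Fin r, if a < b then tf r s (Sum.inr (Sum.inr b)) else 0)
      = -(∑ a : Fin r, ∑ b : Fin r, if a < b then (1:ℝ) else 0) := by
    rw [← Finset.sum_neg_distrib]
    refine Finset.sum_congr rfl fun a _ => ?_
    rw [← Finset.sum_neg_distrib]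
    refine Finset.sum_congr rfl fun b _ => ?_
    by_cases h : a < b
    · rw [if_pos h, if_pos h]; rfl
    · rw [if_neg h, if_neg h]; ring
  have zp1 : (∑ i : Fin s, ∑ j : Fin s, if (j:ℕ) = (i:ℕ)+1
        then tf r s (Sum.inr (Sum.inl i)) else 0)
      = ((s:ℝ)-1) * (1 - 2/((s:ℝ)+1)) + (-2/((s:ℝ)+1)) * (((s:ℝ)-1)*(((s:ℝ)-1)-1)/2) := by
    rw [Finset.sum_congr rfl fun i _ => sum_succ_eq (tf r s (Sum.inr (Sum.inl i))) i]
    rw [Finset.sum_congr rfl (fun (i : Fin s) _ => if_congr Iff.rfl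
      (show tf r s (Sum.inr (Sum.inl i)) = (1 - 2/((s:ℝ)+1)) + (-2/((s:ℝ)+1)) * ((i:ℕ):ℝ)
        from by simp only [tf]; field_simp; ring) rfl)]
    rw [sum_fin_lt s (fun k => (1 - 2/((s:ℝ)+1)) + (-2/((s:ℝ)+1)) * (k:ℝ)),
      affine_sum (s-1) (1 - 2/((s:ℝ)+1)) (-2/((s:ℝ)+1)), hs1]
  have zp2 : (∑ i : Fin s, ∑ j : Fin s, if (j:ℕ) = (i:ℕ)+1
        then tf r s (Sum.inr (Sum.inl j)) else 0)
      = ((s:ℝ)-1) * (1 - 4/((s:ℝ)+1)) + (-2/((s:ℝ)+1)) * (((s:ℝ)-1)*(((s:ℝ)-1)-1)/2) := by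
    have hcong : ∀ i : Fin s, (∑ j : Fin s, if (j:ℕ) = (i:ℕ)+1
        then tf r s (Sum.inr (Sum.inl j)) else 0)
        = ∑ j : Fin s, if (j:ℕ) = (i:ℕ)+1
            then (1 - 4/((s:ℝ)+1)) + (-2/((s:ℝ)+1)) * ((i:ℕ):ℝ) else 0 := by
      intro i
      refine Finset.sum_congr rfl fun j _ => ?_
      by_cases h : (j:ℕ) = (i:ℕ)+1
      · rw [if_pos h, if_pos h]
        have hj : ((j:ℕ):ℝ) = ((i:ℕ):ℝ)+1 := by exact_mod_cast h
        simp only [tf]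
        rw [hj]
        field_simp
        ring
      · rw [if_neg h, if_neg h]
    rw [Finset.sum_congr rfl fun i _ => hcong i]
    have h2 : ∀ i : Fin s, (∑ j : Fin s, if (j:ℕ) = (i:ℕ)+1
          then (1 - 4/((s:ℝ)+1)) + (-2/((s:ℝ)+1)) * ((i:ℕ):ℝ) else 0)
        = if (i:ℕ)+1 < s then (1 - 4/((s:ℝ)+1)) + (-2/((s:ℝ)+1)) * ((i:ℕ):ℝ) else 0 :=
      fun i => sum_succ_eq _ i
    rw [Finset.sum_congr rfl fun i _ => h2 i]
    rw [sum_fin_lt s (fun k => (1 - 4/((s:ℝ)+1)) + (-2/((s:ℝ)+1)) * (k:ℝ)),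
      affine_sum (s-1) (1 - 4/((s:ℝ)+1)) (-2/((s:ℝ)+1)), hs1]
  rw [zc1, zc1', zc2, zc2', zp1, zp2]
  simp only [tf, Fin.val_mk]
  rw [hs1]
  field_simp
  ring
lemma qform_tf_ge (r s : ℕ) (hr : 0 < r) (hs : 0 < s) :
    2*(r:ℝ)*((r:ℝ)-1) + 2 ≤ (doubleKite r s).qForm (tf r s) := by
  rw [qform_eq, adj_split r s (fun x y => tf r s x ^ 2)]
  rw [E_blocks r s hr hs (fun x y => tf r s x ^ 2), E_blocks r s hr hs (fun x y => tf r s y ^ 2)]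
  have zq1 : (∑ a : Fin r, ∑ b : Fin r, if a < b then tf r s (Sum.inl a) ^ 2 else 0)
      = ∑ a : Fin r, ∑ b : Fin r, if a < b then (1:ℝ) else 0 :=
    Finset.sum_congr rfl fun a _ => Finset.sum_congr rfl fun b _ =>
      if_congr Iff.rfl (by norm_num [tf]) rfl
  have zq1' : (∑ a : Fin r, ∑ b : Fin r, if a < b then tf r s (Sum.inl b) ^ 2 else 0)
      = ∑ a : Fin r, ∑ b : Fin r, if a < b then (1:ℝ) else 0 :=
    Finset.sum_congr rfl fun a _ => Finset.sum_congr rfl fun b _ =>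
      if_congr Iff.rfl (by norm_num [tf]) rfl
  have zq2 : (∑ a : Fin r, ∑ b : Fin r, if a < b then tf r s (Sum.inr (Sum.inr a)) ^ 2 else 0)
      = ∑ a : Fin r, ∑ b : Fin r, if a < b then (1:ℝ) else 0 :=
    Finset.sum_congr rfl fun a _ => Finset.sum_congr rfl fun b _ =>
      if_congr Iff.rfl (by norm_num [tf]) rfl
  have zq2' : (∑ a : Fin r, ∑ b : Fin r, if a < b then tf r s (Sum.inr (Sum.inr b)) ^ 2 else 0)
      = ∑ a : Fin r, ∑ b : Fin r, if a < b then (1:ℝ) else 0 :=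
    Finset.sum_congr rfl fun a _ => Finset.sum_congr rfl fun b _ =>
      if_congr Iff.rfl (by norm_num [tf]) rfl
  have h1 : tf r s (Sum.inl (⟨0,hr⟩ : Fin r)) ^ 2 = 1 := by norm_num [tf]
  have h2 : tf r s (Sum.inr (Sum.inr (⟨0,hr⟩ : Fin r))) ^ 2 = 1 := by norm_num [tf]
  have hpath : ∀ (c : Fin s → Fin s → ℝ),
      0 ≤ ∑ i : Fin s, ∑ j : Fin s, if (j:ℕ) = (i:ℕ)+1 then (c i j) ^ 2 else 0 := by
    intro c
    refine Finset.sum_nonneg fun i _ => Finset.sum_nonneg fun j _ => ?_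
    split_ifs
    · positivity
    · exact le_refl 0
  have hp1 := hpath (fun i j => tf r s (Sum.inr (Sum.inl i)))
  have hp2 := hpath (fun i j => tf r s (Sum.inr (Sum.inl j)))
  have hq1 : (0:ℝ) ≤ tf r s (Sum.inr (Sum.inl (⟨s-1, by omega⟩ : Fin s))) ^ 2 := sq_nonneg _
  have hq2 : (0:ℝ) ≤ tf r s (Sum.inr (Sum.inl (⟨0,hs⟩ : Fin s))) ^ 2 := sq_nonneg _
  have hP := pair_count r
  rw [zq1, zq1', zq2, zq2', h1, h2]
  nlinarith [hp1, hp2, hq1, hq2]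
lemma lambda1_main (r s : ℕ) (hr : 0 < r) (hs : 0 < s) :
    (doubleKite r s).lambda1 ≤ 2 / (((s:ℝ)+1) * ((r:ℝ)^2 - (r:ℝ) + 1)) := by
  have hr1 : (1:ℝ) ≤ (r:ℝ) := by exact_mod_cast hr
  have hden : (0:ℝ) < 2*(r:ℝ)*((r:ℝ)-1) + 2 := by nlinarith
  have hq := qform_tf_ge r s hr hs
  have hqpos : 0 < (doubleKite r s).qForm (tf r s) := lt_of_lt_of_le hden hq
  have hE := energy_tf r s hr hs
  have hc := constraint_tf r s hr hs
  have hstep := lambda1_le_ratio (doubleKite r s) (tf r s) hc (ne_of_gt hqpos)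
  rw [hE] at hstep
  have hσ : (0:ℝ) < (s:ℝ)+1 := by positivity
  have h4 : (0:ℝ) ≤ 4/((s:ℝ)+1) := by positivity
  have hdiv : 4/((s:ℝ)+1) / (doubleKite r s).qForm (tf r s)
      ≤ 4/((s:ℝ)+1) / (2*(r:ℝ)*((r:ℝ)-1) + 2) :=
    div_le_div_of_nonneg_left h4 hden hq
  refine le_trans hstep (le_trans hdiv (le_of_eq ?_))
  rw [div_div]
  have h1 : ((s:ℝ)+1) * (2*(r:ℝ)*((r:ℝ)-1) + 2) ≠ 0 := by positivity
  have h2 : ((s:ℝ)+1) * ((r:ℝ)^2 - (r:ℝ) + 1) ≠ 0 := by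
    have : (0:ℝ) < ((s:ℝ)+1) * ((r:ℝ)^2 - (r:ℝ) + 1) := by nlinarith
    exact ne_of_gt this
  rw [div_eq_div_iff h1 h2]
  ring

lemma final_arith (ε x a b : ℝ) (hε : 0 < ε) (hx10 : 10 ≤ x) (hεx : 120 ≤ ε*x)
    (c2 : x ≤ 3*a+2) (c3 : x ≤ 3*b+6) (c4 : 3 ≤ a) (c5 : 1 ≤ b) :
    2/((b+1)*(a^2 - a + 1)) ≤ (1+ε)*(54/x^3) := by
  have hb : (0:ℝ) < b + 1 := by linarith
  have ha : (0:ℝ) < a^2 - a + 1 := by nlinarith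
  have hden : (0:ℝ) < (b+1)*(a^2 - a + 1) := mul_pos hb ha
  have hx0 : (0:ℝ) < x := by linarith
  have hx3 : (0:ℝ) < x^3 := by positivity
  rw [show (1+ε)*(54/x^3) = ((1+ε)*54)/x^3 by ring]
  rw [div_le_div_iff₀ hden hx3]
  have e1 : x - 2 ≤ 3*a := by linarith
  have e2 : x - 5 ≤ 3*a - 3 := by linarith
  have e3 : (0:ℝ) ≤ x - 5 := by linarith
  have m1 : (x-2)*(x-5) ≤ (3*a)*(3*a-3) := mul_le_mul e1 e2 e3 (by linarith)
  have e4 : x - 3 ≤ 3*(b+1) := by linarith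
  have m2 : (x-3)*((x-2)*(x-5)) ≤ (3*(b+1))*((3*a)*(3*a-3)) :=
    mul_le_mul e4 m1 (mul_nonneg (by linarith) e3) (by linarith)
  have h27 : (x-3)*((x-2)*(x-5)) ≤ 27*((b+1)*(a^2-a+1)) := by nlinarith [m2, c5]
  have t1 : (x-5)^3 ≤ (x-3)*((x-2)*(x-5)) := by
    nlinarith [mul_nonneg e3 (show (0:ℝ) ≤ 5*x-19 by linarith)]
  have u1 : x/2 ≤ x - 5 := by linarith
  have u2 : (x/2)^3 ≤ (x-5)^3 := by
    have h0 : (0:ℝ) ≤ x/2 := by linarith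
    exact pow_le_pow_left₀ h0 u1 3
  have u3 : 15*x^2 ≤ ε*(x/2)^3 := by
    nlinarith [mul_nonneg (show (0:ℝ) ≤ ε*x - 120 by linarith) (sq_nonneg x)]
  have u4 : ε*(x/2)^3 ≤ ε*(x-5)^3 := mul_le_mul_of_nonneg_left u2 hε.le
  have u5 : 15*x^2 ≤ ε*(x-5)^3 := le_trans u3 u4
  have t2 : x^3 ≤ (1+ε)*((x-3)*((x-2)*(x-5))) := by
    nlinarith [t1, u5, mul_le_mul_of_nonneg_left t1 (show (0:ℝ) ≤ 1+ε by linarith), hx10]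
  nlinarith [t2, h27, mul_le_mul_of_nonneg_left h27 (show (0:ℝ) ≤ 1+ε by linarith)]

/-- The double kite graph `DK(⌊n/3⌋, n - 2⌊n/3⌋ - 2)` has normalized Laplacian spectral gap
at most `(1+o(1))·54/n³`. -/
theorem doubleKite_lambda1_le : ∀ ε : ℝ, 0 < ε → ∃ N : ℕ, ∀ n : ℕ, N ≤ n →
    (doubleKite (n / 3) (n - 2 * (n / 3) - 2)).lambda1 ≤ (1 + ε) * (54 / (n : ℝ)^3) := by
  intro ε hε
  refine ⟨max 10 ⌈120/ε⌉₊, fun n hn => ?_⟩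
  have hn10 : 10 ≤ n := le_trans (le_max_left _ _) hn
  have hr : 0 < n / 3 := by omega
  have hs : 0 < n - 2 * (n / 3) - 2 := by omega
  refine le_trans (lambda1_main (n / 3) (n - 2 * (n / 3) - 2) hr hs) ?_
  have hnx : (120:ℝ)/ε ≤ (n:ℝ) := by
    have h1 : ((⌈120/ε⌉₊ : ℕ) : ℝ) ≤ (n:ℝ) := by
      exact_mod_cast le_trans (le_max_right _ _) hn
    exact le_trans (Nat.le_ceil _) h1
  have hx10 : (10:ℝ) ≤ (n:ℝ) := by exact_mod_cast hn10
  have hεx : 120 ≤ ε * (n:ℝ) := by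
    rw [div_le_iff₀ hε] at hnx
    linarith [hnx]
  have k2 : n ≤ 3 * (n / 3) + 2 := by omega
  have k3 : n ≤ 3 * (n - 2 * (n / 3) - 2) + 6 := by omega
  have k4 : 3 ≤ n / 3 := by omega
  have c2 : (n:ℝ) ≤ 3*((n / 3 : ℕ):ℝ)+2 := by exact_mod_cast k2
  have c3 : (n:ℝ) ≤ 3*(((n - 2 * (n / 3) - 2 : ℕ)):ℝ)+6 := by exact_mod_cast k3
  have c4 : (3:ℝ) ≤ ((n / 3 : ℕ):ℝ) := by exact_mod_cast k4
  have c5 : (1:ℝ) ≤ ((n - 2 * (n / 3) - 2 : ℕ):ℝ) := by exact_mod_cast hs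
  exact final_arith ε (n:ℝ) ((n / 3 : ℕ):ℝ) ((n - 2 * (n / 3) - 2 : ℕ):ℝ)
    hε hx10 hεx c2 c3 c4 c5
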